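/- Let ρ ∈ (0,1] and let P_{j,k} ∈ [0,1] be defined for all integers 1 ≤ k ≤ j, satisfying: (i) P_{k,k} ≥ ρ^k / k! for every k ≥ 1; (ii) P_{j,k} ≤ P_{j,k−1} for all 2 ≤ k ≤ j; (iii) P_{j,1} ≥ P_{j−1,1} + (ρ/j)·(1 − P_{j−1,1}) for all j ≥ 2; (iv) P_{j,k} ≥ P_{j−1,k} + (ρ/j)·(P_{j−1,k−1} − P_{j−1,k}) for all j > k ≥ 2. Then for every fixed k ≥ 1, P_{j,k} → 1 as j → ∞. -/
import Mathlib


open Filter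

private lemma key_tendsto (ρ : ℝ) (hρ0 : 0 < ρ) (hρ1 : ρ ≤ 1) (k : ℕ) (Q ε : ℕ → ℝ)
    (hQ0 : ∀ j, k ≤ j → 0 ≤ Q j) (hQ1 : ∀ j, k ≤ j → Q j ≤ 1)
    (hεlim : Tendsto ε atTop (nhds 0))
    (hrec : ∀ j, k ≤ j → Q (j+1) ≤ Q j * (1 - ρ/(j+1)) + (ρ/(j+1)) * ε j) :
    Tendsto Q atTop (nhds 0) := by
  rw [Metric.tendsto_atTop]
  intro d hd
  set δ := d/2 with hδdef
  have hδ : 0 < δ := by positivity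
  obtain ⟨N₀, hN₀⟩ := Metric.tendsto_atTop.1 hεlim (δ/2) (by positivity)
  set N := max k N₀ with hN
  have hNk : k ≤ N := le_max_left _ _
  have hεsmall : ∀ j, N ≤ j → ε j ≤ δ/2 := by
    intro j hj
    have h := hN₀ j (le_trans (le_max_right _ _) hj)
    rw [Real.dist_eq, sub_zero] at h
    exact (abs_lt.1 h).2.le
  -- basic facts about r j := ρ/(j+1)
  have hr0 : ∀ j : ℕ, 0 < ρ/((j:ℝ)+1) := by
    intro j; positivity
  have hr1 : ∀ j : ℕ, ρ/((j:ℝ)+1) ≤ 1 := by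
    intro j
    rw [div_le_one (by positivity)]
    have : (1:ℝ) ≤ (j:ℝ)+1 := by
      have := Nat.cast_nonneg (α := ℝ) j; linarith
    linarith
  -- Existence of M ≥ N with Q M ≤ δ
  have hH := Real.tendsto_sum_range_one_div_nat_succ_atTop
  set H : ℕ → ℝ := fun n => ∑ i ∈ Finset.range n, (1 / ((i:ℝ) + 1)) with hHdef
  have hex : ∃ M, N ≤ M ∧ Q M ≤ δ := by
    by_contra hcon
    push_neg at hcon
    have hgt : ∀ m, N ≤ m → δ < Q m := fun m hm => hcon m hm
    have hdec : ∀ n : ℕ, Q (N + n) ≤ Q N - ρ * (δ/2) * (H (N + n) - H N) := by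
      intro n
      induction n with
      | zero => simp
      | succ n ih =>
        have hkn : k ≤ N + n := le_trans hNk (Nat.le_add_right _ _)
        have hrec' := hrec (N + n) hkn
        have hε' := hεsmall (N + n) (Nat.le_add_right _ _)
        have hgt' := hgt (N + n) (Nat.le_add_right _ _)
        have hr0' := hr0 (N + n)
        have hr1' := hr1 (N + n)
        have hHstep : H (N + n + 1) - H (N + n) = 1 / ((N + n : ℕ) + 1 : ℝ) := by
          simp [hHdef, Finset.sum_range_succ]
        have hQstep : Q (N + n + 1) ≤ Q (N + n) - (ρ/((N + n : ℕ) + 1 : ℝ)) * (δ/2) := by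
          nlinarith [hrec', hε', hgt', hr0', hr1']
        have : (ρ/((N + n : ℕ) + 1 : ℝ)) * (δ/2) = ρ * (δ/2) * (H (N + n + 1) - H (N + n)) := by
          rw [hHstep]; ring
        rw [show N + (n+1) = (N + n) + 1 from rfl]
        rw [this] at hQstep
        linarith
    -- choose m with H m large
    have hC : ∀ᶠ m in atTop, H m ≥ H N + (Q N + 1)/(ρ * (δ/2)) := by
      exact (tendsto_atTop.1 hH _)
    obtain ⟨m, hm1, hm2⟩ := (hC.and (eventually_ge_atTop N)).exists
    have hmin : N + (m - N) = m := Nat.add_sub_cancel' hm2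
    have := hdec (m - N)
    rw [hmin] at this
    have hpos : 0 < ρ * (δ/2) := by positivity
    have : Q m ≤ Q N - ρ * (δ/2) * ((Q N + 1)/(ρ * (δ/2))) := by
      have h2 : ρ * (δ/2) * (H m - H N) ≥ ρ * (δ/2) * ((Q N + 1)/(ρ * (δ/2))) := by
        apply mul_le_mul_of_nonneg_left _ hpos.le
        linarith
      linarith
    rw [mul_div_cancel₀ _ hpos.ne'] at this
    have hQm0 : 0 ≤ Q m := hQ0 m (le_trans hNk hm2)
    linarith
  obtain ⟨M, hMN, hQM⟩ := hex
  -- persistence: Q stays ≤ δ for all j ≥ M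
  have hpers : ∀ j, M ≤ j → Q j ≤ δ := by
    intro j hj
    induction j with
    | zero => exact Nat.le_zero.1 hj ▸ hQM
    | succ j ih =>
      rcases Nat.lt_or_ge M (j+1) with h | h
      · have hMj : M ≤ j := Nat.lt_succ_iff.1 h
        have hQj := ih hMj
        have hkj : k ≤ j := le_trans hNk (le_trans hMN hMj)
        have hrec' := hrec j hkj
        have hε' := hεsmall j (le_trans hMN hMj)
        have hQj0 := hQ0 j hkj
        have hr0' := hr0 j
        have hr1' := hr1 j
        nlinarith
      · have : M = j + 1 := le_antisymm hj h
        exact this ▸ hQM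
  refine ⟨M, fun n hn => ?_⟩
  have h0 : 0 ≤ Q n := hQ0 n (le_trans hNk (le_trans hMN hn))
  have h1 : Q n ≤ δ := hpers n hn
  rw [Real.dist_eq, sub_zero, abs_of_nonneg h0]
  have : δ < d := by rw [hδdef]; linarith
  linarith

/-- Analytic core of Theorem 1 of the paper: if `P j k ∈ [0,1]` (for `1 ≤ k ≤ j`)
satisfies (i) `P k k ≥ ρ^k/k!`, (ii) `P j k ≤ P j (k−1)`,
(iii) `P j 1 ≥ P (j−1) 1 + (ρ/j)(1 − P (j−1) 1)`, and
(iv) `P j k ≥ P (j−1) k + (ρ/j)(P (j−1) (k−1) − P (j−1) k)` for `j > k ≥ 2`,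
then `P j k → 1` as `j → ∞` for every fixed `k ≥ 1`. -/
theorem stmt_8 (ρ : ℝ) (hρ : ρ ∈ Set.Ioc (0:ℝ) 1)
    (P : ℕ → ℕ → ℝ)
    (hmem : ∀ j k : ℕ, 1 ≤ k → k ≤ j → P j k ∈ Set.Icc (0:ℝ) 1)
    (hi : ∀ k : ℕ, 1 ≤ k → P k k ≥ ρ ^ k / (Nat.factorial k : ℝ))
    (hii : ∀ j k : ℕ, 2 ≤ k → k ≤ j → P j k ≤ P j (k - 1))
    (hiii : ∀ j : ℕ, 2 ≤ j → P j 1 ≥ P (j - 1) 1 + (ρ / j) * (1 - P (j - 1) 1))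
    (hiv : ∀ j k : ℕ, 2 ≤ k → k < j →
      P j k ≥ P (j - 1) k + (ρ / j) * (P (j - 1) (k - 1) - P (j - 1) k)) :
    ∀ k : ℕ, 1 ≤ k → Tendsto (fun j => P j k) atTop (nhds 1) := by
  obtain ⟨hρ0, hρ1⟩ := hρ
  -- prove 1 - P j k → 0 by strong induction on k
  suffices h : ∀ k : ℕ, 1 ≤ k → Tendsto (fun j => 1 - P j k) atTop (nhds 0) by
    intro k hk
    have := (h k hk).const_sub 1
    simpa using this
  intro k
  induction k with
  | zero => intro h; omega
  | succ k ih =>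
    intro _
    rcases Nat.eq_zero_or_pos k with hk0 | hk1
    · -- base case k+1 = 1
      subst hk0
      apply key_tendsto ρ hρ0 hρ1 1 _ (fun _ => (0:ℝ))
      · intro j hj
        have := (hmem j 1 le_rfl hj).2; linarith
      · intro j hj
        have := (hmem j 1 le_rfl hj).1; linarith
      · exact tendsto_const_nhds
      · intro j hj
        have h2 : 2 ≤ j + 1 := by omega
        have := hiii (j+1) h2
        have hj1 : (j + 1 : ℕ) - 1 = j := by omega
        rw [hj1] at this
        have hc : ((j:ℝ) + 1) = ((j + 1 : ℕ) : ℝ) := by push_cast; ring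
        rw [hc]
        nlinarith [this]
    · -- inductive case k+1 ≥ 2
      have ihk := ih hk1
      apply key_tendsto ρ hρ0 hρ1 (k+1) _ (fun j => 1 - P j k)
      · intro j hj
        have := (hmem j (k+1) (by omega) hj).2; linarith
      · intro j hj
        have := (hmem j (k+1) (by omega) hj).1; linarith
      · exact ihk
      · intro j hj
        have h2 : 2 ≤ k + 1 := by omega
        have hlt : k + 1 < j + 1 := by omega
        have := hiv (j+1) (k+1) h2 hlt
        have hj1 : (j + 1 : ℕ) - 1 = j := by omega
        have hk1' : (k + 1 : ℕ) - 1 = k := by omega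
        rw [hj1, hk1'] at this
        have hc : ((j:ℝ) + 1) = ((j + 1 : ℕ) : ℝ) := by push_cast; ring
        rw [hc]
        nlinarith [this]
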